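/- Let A, B, C be three non-collinear points in the Euclidean plane with incenter I, and let I₂ be the inversion with center A and radius √(dist(A,B)·dist(A,C)). Then I₂(B) is the reflection of C across the line through A and I (the internal angle bisector at A), and I₂(C) is the reflection of B across that line. -/

import Mathlib

open EuclideanGeometry RealInnerProductSpace

/-- The incenter of the triangle `A B C`. -/
noncomputable def incenterPt (A B C : EuclideanSpace ℝ (Fin 2)) : EuclideanSpace ℝ (Fin 2) :=
  (dist B C + dist C A + dist A B)⁻¹ •
    (dist B C • A + dist C A • B + dist A B • C)

private lemma incenterPt_symm (A B C : EuclideanSpace ℝ (Fin 2)) :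
    incenterPt A B C = incenterPt A C B := by
  unfold incenterPt
  rw [dist_comm C B, dist_comm B A, dist_comm A C]
  congr 1
  · ring
  · abel

private lemma key (A B C : EuclideanSpace ℝ (Fin 2)) (hB : A ≠ B) (hC : A ≠ C) :
    inversion A (Real.sqrt (dist A B * dist A C)) B =
      EuclideanGeometry.reflection (line[ℝ, A, incenterPt A B C]) C := by
  have hb : (0:ℝ) < dist A C := dist_pos.2 hC
  have hc : (0:ℝ) < dist A B := dist_pos.2 hB
  have ha : (0:ℝ) ≤ dist B C := dist_nonneg
  have habc : dist B C + dist A C + dist A B ≠ 0 := by positivity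
  set I := incenterPt A B C with hIdef
  set s : AffineSubspace ℝ (EuclideanSpace ℝ (Fin 2)) := line[ℝ, A, I] with hsdef
  set P : EuclideanSpace ℝ (Fin 2) := (dist A C / dist A B) • (B - A) + A with hPdef
  have hinv : inversion A (Real.sqrt (dist A B * dist A C)) B = P := by
    rw [inversion, hPdef]
    have : (Real.sqrt (dist A B * dist A C) / dist B A) ^ 2 = dist A C / dist A B := by
      rw [div_pow, Real.sq_sqrt (by positivity), dist_comm B A, sq]
      field_simp
    rw [this]
    simp [vsub_eq_sub, vadd_eq_add]
  set M : EuclideanSpace ℝ (Fin 2) := (2:ℝ)⁻¹ • (C + P) with hMdef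
  have hmem : M ∈ s := by
    have h1 : I ∈ s := right_mem_affineSpan_pair ℝ A I
    have h2 : A ∈ s := left_mem_affineSpan_pair ℝ A I
    have h3 := s.smul_vsub_vadd_mem ((dist B C + dist A C + dist A B)/(2 * dist A B)) h1 h2 h2
    convert h3 using 1
    rw [hMdef, hPdef, hIdef]
    simp only [incenterPt, vsub_eq_sub, vadd_eq_add, dist_comm C A]
    match_scalars <;> field_simp <;> ring
  have hperp : M -ᵥ C ∈ s.directionᗮ := by
    have hdir : s.direction = ℝ ∙ (A -ᵥ I) := by
      rw [hsdef, direction_affineSpan, vectorSpan_pair]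
    rw [hdir, Submodule.mem_orthogonal_singleton_iff_inner_right]
    have e1 : A -ᵥ I = (-(dist B C + dist A C + dist A B)⁻¹) •
        ((dist A C) • (B - A) + (dist A B) • (C - A)) := by
      rw [hIdef]
      simp only [incenterPt, vsub_eq_sub, dist_comm C A]
      match_scalars <;> field_simp <;> ring
    have e2 : M -ᵥ C = (2:ℝ)⁻¹ • ((dist A C / dist A B) • (B - A) - (C - A)) := by
      rw [hMdef, hPdef]
      simp only [vsub_eq_sub]
      match_scalars <;> ring
    rw [e1, e2]
    set u := B - A with hu'
    set v := C - A with hv'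
    have hu : (inner ℝ u u : ℝ) = dist A B ^ 2 := by
      rw [real_inner_self_eq_norm_sq, hu', dist_eq_norm, norm_sub_rev]
    have hv : (inner ℝ v v : ℝ) = dist A C ^ 2 := by
      rw [real_inner_self_eq_norm_sq, hv', dist_eq_norm, norm_sub_rev]
    simp only [inner_add_left, inner_sub_right, real_inner_smul_left, real_inner_smul_right]
    rw [real_inner_comm v u, hu, hv]
    field_simp
    ring
  have hproj : (orthogonalProjection s C : EuclideanSpace ℝ (Fin 2)) = M := by
    have h1 := inter_eq_singleton_orthogonalProjection (s := s) C
    have hMs : M ∈ (s : Set (EuclideanSpace ℝ (Fin 2))) ∩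
        AffineSubspace.mk' C s.directionᗮ :=
      ⟨hmem, (AffineSubspace.mem_mk').2 hperp⟩
    rw [h1, Set.mem_singleton_iff] at hMs
    exact hMs.symm
  rw [hinv, EuclideanGeometry.reflection_apply', hproj]
  rw [hMdef]
  simp only [vsub_eq_sub, vadd_eq_add]
  module

/-- The inversion `I₂` centered at `A` with radius `√(|AB|·|AC|)` swaps `B` and `C`
up to reflection in the internal angle bisector at `A` (the line through `A` and the
incenter `I`): `I₂(B)` is the reflection of `C` and `I₂(C)` is the reflection of `B`. -/
theorem inversion_swaps_vertices_up_to_reflection (A B C : EuclideanSpace ℝ (Fin 2))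
    (h : AffineIndependent ℝ ![A, B, C]) :
    inversion A (Real.sqrt (dist A B * dist A C)) B =
      EuclideanGeometry.reflection (line[ℝ, A, incenterPt A B C]) C ∧
    inversion A (Real.sqrt (dist A B * dist A C)) C =
      EuclideanGeometry.reflection (line[ℝ, A, incenterPt A B C]) B := by
  have hAB : A ≠ B := by
    intro he
    have := h.injective (a₁ := 0) (a₂ := 1) (by simpa using he)
    simp at this
  have hAC : A ≠ C := by
    intro he
    have := h.injective (a₁ := 0) (a₂ := 2) (by simpa using he)
    simp at this
  constructor
  · exact key A B C hAB hAC
  · rw [incenterPt_symm A B C, show dist A B * dist A C = dist A C * dist A B from mul_comm _ _]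
    exact key A C B hAC hAB
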